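/- Let q ≥ 1, let n ≥ 1, and let f be a formal power series in q variables over ℝ with ord f = m ∈ ℕ, m > 0. Suppose that the initial block of f is a single monomial f_α·X^α for some multi-index α with |α| = m (i.e., f_c = 0 for all c ≠ α with |c| = m), and that there exists a q-fps g with constant coefficient g_θ = 1 such that f = (f_α·X^α)·g. Then f possesses an n-th root if and only if f_α·X^α possesses an n-th root. -/

import Mathlib

open MvPowerSeries Finset

namespace NthRootAux

variable {q : ℕ}

lemma degree_add' (a b : Fin q →₀ ℕ) : (a + b).degree = a.degree + b.degree := by
  simp [Finsupp.degree_eq_weight_one, map_add]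

lemma degree_mono' {a b : Fin q →₀ ℕ} (h : a ≤ b) : a.degree ≤ b.degree := by
  obtain ⟨c, rfl⟩ := le_iff_exists_add.mp h
  simp [degree_add']

/-- The coefficient of `φ ^ k` at `c` only depends on the coefficients of `φ`
at indices `≤ c`. -/
lemma coeff_pow_congr (k : ℕ) (φ ψ : MvPowerSeries (Fin q) ℝ) (c : Fin q →₀ ℕ)
    (h : ∀ b ≤ c, MvPowerSeries.coeff b φ = MvPowerSeries.coeff b ψ) :
    ∀ b ≤ c, MvPowerSeries.coeff b (φ ^ k) = MvPowerSeries.coeff b (ψ ^ k) := by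
  induction k with
  | zero => simp
  | succ k ih =>
    intro b hb
    rw [pow_succ, pow_succ, MvPowerSeries.coeff_mul, MvPowerSeries.coeff_mul]
    refine Finset.sum_congr rfl ?_
    rintro ⟨x, y⟩ hxy
    rw [Finset.HasAntidiagonal.mem_antidiagonal] at hxy
    have hx : x ≤ b := hxy ▸ le_self_add
    have hy : y ≤ b := hxy ▸ le_add_self
    rw [ih x (hx.trans hb), h y (hy.trans hb)]

/-- Uniqueness of `n`-th roots with constant coefficient 1, coefficientwise up to
degree `d`. -/
lemma coeff_eq_of_pow_eq {n : ℕ} (hn : 1 ≤ n) (s s' : MvPowerSeries (Fin q) ℝ)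
    (hs : MvPowerSeries.constantCoeff s = 1)
    (hs' : MvPowerSeries.constantCoeff s' = 1)
    {d : ℕ}
    (h : ∀ c : Fin q →₀ ℕ, c.degree ≤ d →
      MvPowerSeries.coeff c (s ^ n) = MvPowerSeries.coeff c (s' ^ n)) :
    ∀ c : Fin q →₀ ℕ, c.degree ≤ d →
      MvPowerSeries.coeff c s = MvPowerSeries.coeff c s' := by
  classical
  intro c
  induction c using WellFoundedLT.induction with
  | _ c ih =>
    intro hc
    set V : MvPowerSeries (Fin q) ℝ := ∑ i ∈ range n, s ^ i * s' ^ (n - 1 - i) with hV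
    have hgeom : V * (s - s') = s ^ n - s' ^ n := geom_sum₂_mul s s' n
    have hV0 : MvPowerSeries.constantCoeff V = (n : ℝ) := by
      rw [hV, map_sum]
      have : ∀ i ∈ range n,
          MvPowerSeries.constantCoeff (s ^ i * s' ^ (n - 1 - i)) = 1 := by
        intro i _
        rw [map_mul, map_pow, map_pow, hs, hs', one_pow, one_pow, one_mul]
      rw [Finset.sum_congr rfl this]
      simp
    have hcoeff : MvPowerSeries.coeff c (V * (s - s')) =
        (n : ℝ) * (MvPowerSeries.coeff c s - MvPowerSeries.coeff c s') := by
      rw [MvPowerSeries.coeff_mul]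
      rw [Finset.sum_eq_single_of_mem ((0 : Fin q →₀ ℕ), c)
        (by rw [Finset.HasAntidiagonal.mem_antidiagonal, zero_add])]
      · rw [MvPowerSeries.coeff_zero_eq_constantCoeff, hV0, map_sub]
      · rintro ⟨a, b⟩ hab hne
        rw [Finset.HasAntidiagonal.mem_antidiagonal] at hab
        have hb : b ≤ c := hab ▸ le_add_self
        have hbne : b ≠ c := by
          rintro rfl
          apply hne
          have : a = 0 := by
            have : a + b = b := hab
            rwa [add_eq_right] at this
          rw [this]
        have hblt : b < c := lt_of_le_of_ne hb hbne
        have : MvPowerSeries.coeff b s = MvPowerSeries.coeff b s' :=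
          ih b hblt ((degree_mono' hb).trans hc)
        rw [map_sub, this, sub_self, mul_zero]
    have h0 : MvPowerSeries.coeff c (V * (s - s')) = 0 := by
      rw [hgeom, map_sub, h c hc, sub_self]
    rw [hcoeff] at h0
    have hn0 : (n : ℝ) ≠ 0 := Nat.cast_ne_zero.mpr (by omega)
    have := mul_eq_zero.mp h0
    rcases this with h' | h'
    · exact absurd h' hn0
    · linarith [sub_eq_zero.mp h']

lemma le_order_of_mul_left (A B : MvPowerSeries (Fin q) ℝ) :
    A.order ≤ (A * B).order :=
  le_trans le_self_add MvPowerSeries.le_order_mul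

/-- Existence of approximate `n`-th roots up to degree `d`. -/
lemma approx {n : ℕ} (hn : 1 ≤ n) (g : MvPowerSeries (Fin q) ℝ)
    (hg : MvPowerSeries.constantCoeff g = 1) (d : ℕ) :
    ∃ s : MvPowerSeries (Fin q) ℝ, MvPowerSeries.constantCoeff s = 1 ∧
      ∀ c : Fin q →₀ ℕ, c.degree ≤ d →
        MvPowerSeries.coeff c (s ^ n) = MvPowerSeries.coeff c g := by
  classical
  induction d with
  | zero =>
    refine ⟨1, by simp, ?_⟩
    intro c hc
    have hc0 : c = 0 := by
      rwa [Nat.le_zero, Finsupp.degree_eq_zero_iff] at hc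
    subst hc0
    simp [MvPowerSeries.coeff_zero_eq_constantCoeff, hg]
  | succ d ih =>
    obtain ⟨s, hs1, hs⟩ := ih
    set Δ : MvPowerSeries (Fin q) ℝ := fun c =>
      if c.degree = d + 1 then
        (MvPowerSeries.coeff c g - MvPowerSeries.coeff c (s ^ n)) / n
      else 0 with hΔdef
    have hΔcoeff : ∀ c : Fin q →₀ ℕ, MvPowerSeries.coeff c Δ =
        if c.degree = d + 1 then
          (MvPowerSeries.coeff c g - MvPowerSeries.coeff c (s ^ n)) / n
        else 0 := fun c => rfl
    have hΔord : ((d + 1 : ℕ) : ℕ∞) ≤ Δ.order := by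
      apply MvPowerSeries.le_order
      intro c hc
      rw [hΔcoeff, if_neg]
      intro h
      rw [h] at hc
      exact absurd hc (by exact_mod_cast lt_irrefl _)
    have hΔpow : ∀ j : ℕ, (((d + 1) * j : ℕ) : ℕ∞) ≤ (Δ ^ j).order := by
      intro j
      induction j with
      | zero => simp
      | succ j ihj =>
        rw [pow_succ]
        refine le_trans ?_ MvPowerSeries.le_order_mul
        rw [Nat.mul_succ, Nat.cast_add]
        exact add_le_add ihj hΔord
    refine ⟨s + Δ, ?_, ?_⟩
    · rw [map_add, hs1, ← MvPowerSeries.coeff_zero_eq_constantCoeff, hΔcoeff,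
        if_neg (by simp), add_zero]
    · intro c hc
      rw [add_comm s Δ, add_pow, map_sum]
      have hsub : ({0, 1} : Finset ℕ) ⊆ range (n + 1) := by
        intro k hk
        simp only [Finset.mem_insert, Finset.mem_singleton] at hk
        rcases hk with rfl | rfl <;> simp [Finset.mem_range] <;> omega
      rw [← Finset.sum_subset hsub ?_]
      · -- sum over {0, 1}
        rw [Finset.sum_insert (by simp), Finset.sum_singleton]
        simp only [pow_zero, one_mul, Nat.choose_zero_right, Nat.cast_one, mul_one,
          Nat.choose_one_right, pow_one]
        have keyn : MvPowerSeries.coeff c (Δ * s ^ (n - 1) * (n : MvPowerSeries (Fin q) ℝ)) =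
            (n : ℝ) * MvPowerSeries.coeff c (Δ * s ^ (n - 1)) := by
          rw [show ((n : MvPowerSeries (Fin q) ℝ)) = MvPowerSeries.C (n : ℝ) from
            (map_natCast (MvPowerSeries.C) n).symm, MvPowerSeries.coeff_mul_C, mul_comm]
        by_cases hcd : c.degree = d + 1
        · -- top degree: the correction term kicks in
          have hΔs : MvPowerSeries.coeff c (Δ * s ^ (n - 1)) =
              (MvPowerSeries.coeff c g - MvPowerSeries.coeff c (s ^ n)) / n := by
            rw [MvPowerSeries.coeff_mul]
            rw [Finset.sum_eq_single_of_mem (c, (0 : Fin q →₀ ℕ))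
              (by rw [Finset.HasAntidiagonal.mem_antidiagonal, add_zero])]
            · rw [MvPowerSeries.coeff_zero_eq_constantCoeff, map_pow, hs1, one_pow, mul_one,
                hΔcoeff, if_pos hcd]
            · rintro ⟨a, b⟩ hab hne
              rw [Finset.HasAntidiagonal.mem_antidiagonal] at hab
              by_cases ha : a.degree = d + 1
              · exfalso
                apply hne
                have hdb : b.degree = 0 := by
                  have := degree_add' a b
                  rw [hab, hcd, ha] at this
                  omega
                have hb0 : b = 0 := by rwa [Finsupp.degree_eq_zero_iff] at hdb
                subst hb0
                have hac : a = c := by simpa using hab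
                rw [hac]
              · rw [hΔcoeff, if_neg ha, zero_mul]
          rw [Nat.sub_zero, keyn, hΔs,
            mul_div_cancel₀ _ (Nat.cast_ne_zero.mpr (by omega) : (n : ℝ) ≠ 0)]
          ring
        · -- lower degree: the correction term has no effect
          have hcd' : c.degree ≤ d := by omega
          have hΔs : MvPowerSeries.coeff c (Δ * s ^ (n - 1)) = 0 := by
            apply MvPowerSeries.coeff_of_lt_order
            calc ((c.degree : ℕ∞)) < ((d + 1 : ℕ) : ℕ∞) := by exact_mod_cast by omega
              _ ≤ Δ.order := hΔord
              _ ≤ (Δ * s ^ (n - 1)).order := NthRootAux.le_order_of_mul_left _ _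
          rw [Nat.sub_zero, keyn, hΔs, mul_zero, add_zero, hs c hcd']
      · intro k hk hk'
        have h2 : 2 ≤ k := by
          simp only [Finset.mem_insert, Finset.mem_singleton] at hk'
          omega
        apply MvPowerSeries.coeff_of_lt_order
        calc ((c.degree : ℕ∞)) ≤ ((d + 1 : ℕ) : ℕ∞) := by exact_mod_cast hc
          _ < (((d + 1) * k : ℕ) : ℕ∞) := by
              have : d + 1 < (d + 1) * k := by nlinarith
              exact_mod_cast this
          _ ≤ (Δ ^ k).order := hΔpow k
          _ ≤ (Δ ^ k * (s ^ (n - k) * ((n.choose k : ℕ) : MvPowerSeries (Fin q) ℝ))).order :=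
              le_order_of_mul_left _ _
          _ = (Δ ^ k * s ^ (n - k) * ((n.choose k : ℕ) : MvPowerSeries (Fin q) ℝ)).order := by
              rw [mul_assoc]

/-- Every multivariate power series over `ℝ` with constant coefficient `1`
has an `n`-th root (for `n ≥ 1`). -/
lemma exists_nthRoot {n : ℕ} (hn : 1 ≤ n) (g : MvPowerSeries (Fin q) ℝ)
    (hg : MvPowerSeries.constantCoeff g = 1) :
    ∃ s : MvPowerSeries (Fin q) ℝ,
      MvPowerSeries.constantCoeff s = 1 ∧ s ^ n = g := by
  choose S hS1 hS using approx hn g hg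
  set s : MvPowerSeries (Fin q) ℝ := fun c => MvPowerSeries.coeff c (S c.degree) with hsdef
  have hscoeff : ∀ c : Fin q →₀ ℕ,
      MvPowerSeries.coeff c s = MvPowerSeries.coeff c (S c.degree) := fun c => rfl
  have hagree : ∀ (d : ℕ) (c : Fin q →₀ ℕ), c.degree ≤ d →
      MvPowerSeries.coeff c s = MvPowerSeries.coeff c (S d) := by
    intro d c hc
    rw [hscoeff]
    exact coeff_eq_of_pow_eq hn (S c.degree) (S d) (hS1 _) (hS1 _)
      (fun b hb => (hS c.degree b hb).trans (hS d b (hb.trans hc)).symm) c le_rfl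
  have hs1 : MvPowerSeries.constantCoeff s = 1 := by
    rw [← MvPowerSeries.coeff_zero_eq_constantCoeff, hagree 0 0 (by simp),
      MvPowerSeries.coeff_zero_eq_constantCoeff, hS1 0]
  refine ⟨s, hs1, ?_⟩
  ext c
  have h1 : ∀ b ≤ c, MvPowerSeries.coeff b s = MvPowerSeries.coeff b (S c.degree) :=
    fun b hb => hagree c.degree b (degree_mono' hb)
  rw [coeff_pow_congr n s (S c.degree) c h1 c le_rfl, hS c.degree c le_rfl]

end NthRootAux

/-- If a multivariable formal power series `f` over `ℝ` of positive order `m` has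
initial block a single monomial `f_α · X^α` (`|α| = m`) and factors as
`f = (f_α · X^α) · g` with `g_θ = 1`, then `f` has an `n`-th root if and only if
the monomial `f_α · X^α` has an `n`-th root. -/
theorem exists_nthRoot_iff_monomial_initial_block {q n m : ℕ} (hq : 1 ≤ q) (hn : 1 ≤ n)
    (hm : 0 < m) (f g : MvPowerSeries (Fin q) ℝ) (α : Fin q →₀ ℕ)
    (hord : f.order = (m : ℕ∞)) (hα : α.degree = m)
    (hblock : ∀ c : Fin q →₀ ℕ, c.degree = m → c ≠ α → MvPowerSeries.coeff c f = 0)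
    (hgθ : MvPowerSeries.constantCoeff g = 1)
    (hfact : f = (MvPowerSeries.monomial α (MvPowerSeries.coeff α f)) * g) :
    (∃ h : MvPowerSeries (Fin q) ℝ, h ^ n = f) ↔
      (∃ r : MvPowerSeries (Fin q) ℝ,
        r ^ n = MvPowerSeries.monomial α (MvPowerSeries.coeff α f)) := by
  obtain ⟨s, hs1, hsn⟩ := NthRootAux.exists_nthRoot hn g hgθ
  have hsu : s * MvPowerSeries.invOfUnit s 1 = 1 :=
    MvPowerSeries.mul_invOfUnit s 1 (by simp [hs1])
  constructor
  · rintro ⟨h, hh⟩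
    refine ⟨h * MvPowerSeries.invOfUnit s 1, ?_⟩
    calc (h * MvPowerSeries.invOfUnit s 1) ^ n
        = h ^ n * (MvPowerSeries.invOfUnit s 1) ^ n := mul_pow _ _ _
      _ = (MvPowerSeries.monomial α (MvPowerSeries.coeff α f)) * s ^ n *
            (MvPowerSeries.invOfUnit s 1) ^ n := by rw [hh, hsn, ← hfact]
      _ = (MvPowerSeries.monomial α (MvPowerSeries.coeff α f)) *
            (s * MvPowerSeries.invOfUnit s 1) ^ n := by rw [mul_pow, mul_assoc]
      _ = MvPowerSeries.monomial α (MvPowerSeries.coeff α f) := by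
            rw [hsu, one_pow, mul_one]
  · rintro ⟨r, hr⟩
    exact ⟨r * s, by rw [mul_pow, hr, hsn, ← hfact]⟩
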